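/- General conditions for stationarity: let G be a finite simple graph in which every vertex has positive degree, M a set of marked vertices, and ψ : Dart(G) → ℂ a state satisfying: (1) there is a constant a such that ψ(e) = a for every dart e with unmarked source e.fst ∉ M; (2) for every marked vertex v ∈ M, the sum of the amplitudes of darts with source v is zero: Σ_{e : e.fst = v} ψ(e) = 0; (3) ψ(e) = ψ(e.symm) for every dart e. Then ψ is fixed by one step of the search algorithm: (S∘C∘Q)ψ = ψ. -/
import Mathlib


namespace GraphWalk

variable {V : Type*}

/-- The flip-flop shift operator `S` on the darts of a simple graph:
`(Sψ)(e) = ψ(e.symm)`. -/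
noncomputable def shift (G : SimpleGraph V) (ψ : G.Dart → ℂ) : G.Dart → ℂ :=
  fun e => ψ e.symm

/-- The Grover coin `C`:
`(Cψ)(e) = (2/deg(e.fst)) Σ_{e' : e'.fst = e.fst} ψ(e') − ψ(e)`. -/
noncomputable def coin [Fintype V] [DecidableEq V] (G : SimpleGraph V)
    [DecidableRel G.Adj] (ψ : G.Dart → ℂ) : G.Dart → ℂ :=
  fun e => (2 / (G.degree e.fst : ℂ)) *
      (∑ e' ∈ Finset.univ.filter (fun e' : G.Dart => e'.fst = e.fst), ψ e') - ψ e

/-- The query `Q`, flipping the sign of all amplitudes at marked vertices. -/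
noncomputable def query [DecidableEq V] (G : SimpleGraph V) (M : Finset V)
    (ψ : G.Dart → ℂ) : G.Dart → ℂ :=
  fun e => if e.fst ∈ M then -ψ e else ψ e

/-- One step of the search algorithm, `U' = S ∘ C ∘ Q`. -/
noncomputable def step [Fintype V] [DecidableEq V] (G : SimpleGraph V)
    [DecidableRel G.Adj] (M : Finset V) (ψ : G.Dart → ℂ) : G.Dart → ℂ :=
  shift G (coin G (query G M ψ))

/-- One step of the quantum walk without query, `U = S ∘ C`. -/
noncomputable def walk [Fintype V] [DecidableEq V] (G : SimpleGraph V)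
    [DecidableRel G.Adj] (ψ : G.Dart → ℂ) : G.Dart → ℂ :=
  shift G (coin G ψ)

end GraphWalk

/-- General conditions for stationarity: if all amplitudes at darts with unmarked
source equal a constant `a`, the amplitudes at each marked vertex sum to `0`, and the
state is symmetric along every edge, then the state is fixed by one step of the search
algorithm `S ∘ C ∘ Q`. -/
theorem general_stationarity_conditions {V : Type*} [Fintype V] [DecidableEq V]
    (G : SimpleGraph V) [DecidableRel G.Adj] (hdeg : ∀ v : V, 0 < G.degree v)
    (M : Finset V) (ψ : G.Dart → ℂ) (a : ℂ)
    (h1 : ∀ e : G.Dart, e.fst ∉ M → ψ e = a)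
    (h2 : ∀ v ∈ M, ∑ e ∈ Finset.univ.filter (fun e : G.Dart => e.fst = v), ψ e = 0)
    (h3 : ∀ e : G.Dart, ψ e = ψ e.symm) :
    GraphWalk.step G M ψ = ψ := by
  funext e
  show GraphWalk.coin G (GraphWalk.query G M ψ) e.symm = ψ e
  unfold GraphWalk.coin GraphWalk.query
  by_cases hm : e.symm.fst ∈ M
  · have hsum : (∑ e' ∈ Finset.univ.filter (fun e' : G.Dart => e'.fst = e.symm.fst),
        (if e'.fst ∈ M then -ψ e' else ψ e')) = 0 := by
      have hcong : ∀ e' ∈ Finset.univ.filter (fun e' : G.Dart => e'.fst = e.symm.fst),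
          (if e'.fst ∈ M then -ψ e' else ψ e') = -ψ e' := by
        intro e' he'
        rw [Finset.mem_filter] at he'
        rw [if_pos (by rw [he'.2]; exact hm)]
      rw [Finset.sum_congr rfl hcong, Finset.sum_neg_distrib, h2 _ hm, neg_zero]
    rw [hsum, if_pos hm, mul_zero, zero_sub, neg_neg, ← h3]
  · have hsum : (∑ e' ∈ Finset.univ.filter (fun e' : G.Dart => e'.fst = e.symm.fst),
        (if e'.fst ∈ M then -ψ e' else ψ e')) = (G.degree e.symm.fst : ℂ) * a := by
      have hcong : ∀ e' ∈ Finset.univ.filter (fun e' : G.Dart => e'.fst = e.symm.fst),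
          (if e'.fst ∈ M then -ψ e' else ψ e') = a := by
        intro e' he'
        rw [Finset.mem_filter] at he'
        have h : e'.fst ∉ M := by rw [he'.2]; exact hm
        rw [if_neg h, h1 _ h]
      rw [Finset.sum_congr rfl hcong, Finset.sum_const,
        SimpleGraph.dart_fst_fiber_card_eq_degree, nsmul_eq_mul]
    have hd : (G.degree e.symm.fst : ℂ) ≠ 0 := by
      exact_mod_cast (hdeg _).ne'
    rw [hsum, if_neg hm, h1 e.symm hm, h3 e, h1 e.symm hm]
    have hd' : ((G.degree e.toProd.2 : ℂ)) ≠ 0 := hd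
    field_simp
    ring
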